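/- arXiv:math/0411288 — 2 statements merged into one kernel-verified Lean document; each statement's English description precedes it below -/
import Mathlib

section
/- Let ε_1,…,ε_n be independent Rademacher random variables and η_1,…,η_n independent standard normal random variables. Let Z = Σ a(j_1,…,j_k) ε_{j_1}⋯ε_{j_k} and Z̄ = Σ |a(j_1,…,j_k)| η_{j_1}⋯η_{j_k}, both sums running over all k-tuples of distinct indices. Then E[Z^{2M}] ≤ E[Z̄^{2M}] for every positive integer M. -/
open MeasureTheory ProbabilityTheory Finset Filter Asymptotics
open scoped ENNReal NNReal

open Real in
open Real in
private lemma rg_integrable_pow_mul_gauss (m : ℕ) :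
    Integrable (fun x : ℝ => x ^ m * rexp (-(2⁻¹ : ℝ) * x ^ 2)) := by
  have h := integrable_rpow_mul_exp_neg_mul_sq (b := (2⁻¹ : ℝ)) (by norm_num)
      (s := (m : ℝ)) (lt_of_lt_of_le neg_one_lt_zero (Nat.cast_nonneg m))
  simpa [Real.rpow_natCast] using h

open Real in
private lemma rg_pdf_eq :
    gaussianPDFReal 0 1 = fun x => (Real.sqrt (2 * π))⁻¹ * rexp (-(2⁻¹ : ℝ) * x ^ 2) := by
  ext x
  simp only [gaussianPDFReal, NNReal.coe_one, mul_one, sub_zero]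
  congr 1
  ring

private lemma rg_gauss_eq : gaussianReal 0 1
    = (volume : Measure ℝ).withDensity (fun x => ENNReal.ofReal (gaussianPDFReal 0 1 x)) := by
  rw [gaussianReal_of_var_ne_zero 0 one_ne_zero]
  rfl

open Real in
private lemma rg_integrable_iff (g : ℝ → ℝ) :
    Integrable g (gaussianReal 0 1)
      ↔ Integrable (fun x => gaussianPDFReal 0 1 x * g x) volume := by
  rw [rg_gauss_eq]
  have hmeas : Measurable fun x => (gaussianPDFReal 0 1 x).toNNReal :=
    (measurable_gaussianPDFReal 0 1).real_toNNReal
  rw [show (fun x => ENNReal.ofReal (gaussianPDFReal 0 1 x))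
      = (fun x => ((gaussianPDFReal 0 1 x).toNNReal : ℝ≥0∞)) from rfl,
    integrable_withDensity_iff_integrable_coe_smul hmeas]
  simp_rw [smul_eq_mul, Real.coe_toNNReal _ (gaussianPDFReal_nonneg 0 1 _)]

open Real in
private lemma rg_integral_eq (g : ℝ → ℝ) :
    ∫ x, g x ∂(gaussianReal 0 1) = ∫ x, gaussianPDFReal 0 1 x * g x := by
  rw [rg_gauss_eq]
  have hmeas : Measurable fun x => (gaussianPDFReal 0 1 x).toNNReal :=
    (measurable_gaussianPDFReal 0 1).real_toNNReal
  rw [show (fun x => ENNReal.ofReal (gaussianPDFReal 0 1 x))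
      = (fun x => ((gaussianPDFReal 0 1 x).toNNReal : ℝ≥0∞)) from rfl,
    integral_withDensity_eq_integral_smul hmeas]
  simp_rw [NNReal.smul_def, smul_eq_mul, Real.coe_toNNReal _ (gaussianPDFReal_nonneg 0 1 _)]

open Real in
private lemma rg_integrable_pow (m : ℕ) :
    Integrable (fun x : ℝ => x ^ m) (gaussianReal 0 1) := by
  rw [rg_integrable_iff, rg_pdf_eq]
  have h := (rg_integrable_pow_mul_gauss m).const_mul (Real.sqrt (2 * π))⁻¹
  exact h.congr (Filter.Eventually.of_forall fun x => by ring)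

open Real in
private lemma rg_deriv (x : ℝ) :
    HasDerivAt (fun x : ℝ => -x * rexp (-(2⁻¹ : ℝ) * x ^ 2))
      (x ^ 2 * rexp (-(2⁻¹ : ℝ) * x ^ 2) - rexp (-(2⁻¹ : ℝ) * x ^ 2)) x := by
  have h1 : HasDerivAt (fun x : ℝ => -(2⁻¹ : ℝ) * x ^ 2) (-(2⁻¹ : ℝ) * (2 * x ^ 1)) x :=
    (hasDerivAt_pow 2 x).const_mul _
  have h2 := h1.exp
  have h3 := (hasDerivAt_id x).neg.mul h2
  simp only [Pi.mul_def, Pi.neg_apply, id_eq] at h3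
  refine h3.congr_deriv ?_
  ring

open Real in
private lemma rg_tendsto_top :
    Tendsto (fun x : ℝ => x * rexp (-(2⁻¹ : ℝ) * x ^ 2)) atTop (nhds 0) := by
  have h := rpow_mul_exp_neg_mul_sq_isLittleO_exp_neg (b := (2⁻¹ : ℝ)) (by norm_num) 1
  have hexp : Tendsto (fun x : ℝ => rexp (-(1 / 2 : ℝ) * x)) atTop (nhds 0) :=
    Real.tendsto_exp_atBot.comp (tendsto_id.const_mul_atTop_of_neg (by norm_num))
  have := h.tendsto_zero_of_tendsto hexp
  exact this.congr fun x => by rw [Real.rpow_one]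

open Real in
private lemma rg_sq_exp_eq :
    ∫ x : ℝ, x ^ 2 * rexp (-(2⁻¹ : ℝ) * x ^ 2) = ∫ x : ℝ, rexp (-(2⁻¹ : ℝ) * x ^ 2) := by
  have hint2 := rg_integrable_pow_mul_gauss 2
  have hint0 : Integrable (fun x : ℝ => rexp (-(2⁻¹ : ℝ) * x ^ 2)) :=
    integrable_exp_neg_mul_sq (by norm_num)
  have hintd := hint2.sub hint0
  have htop : Tendsto (fun x : ℝ => -x * rexp (-(2⁻¹ : ℝ) * x ^ 2)) atTop (nhds 0) := by
    have := rg_tendsto_top.neg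
    rw [neg_zero] at this
    exact this.congr fun x => by ring
  have hbot : Tendsto (fun x : ℝ => -x * rexp (-(2⁻¹ : ℝ) * x ^ 2)) atBot (nhds 0) := by
    have := rg_tendsto_top.comp tendsto_neg_atBot_atTop
    exact this.congr fun x => by simp [neg_sq]
  have hIic := integral_Iic_of_hasDerivAt_of_tendsto' (a := 0)
    (f := fun x : ℝ => -x * rexp (-(2⁻¹ : ℝ) * x ^ 2))
    (fun x _ => rg_deriv x) hintd.integrableOn hbot
  have hIoi := integral_Ioi_of_hasDerivAt_of_tendsto' (a := 0)
    (f := fun x : ℝ => -x * rexp (-(2⁻¹ : ℝ) * x ^ 2))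
    (fun x _ => rg_deriv x) hintd.integrableOn htop
  have htot := intervalIntegral.integral_Iic_add_Ioi (b := (0:ℝ)) hintd.integrableOn hintd.integrableOn
  simp only [Pi.sub_apply] at htot
  have hzero : ∫ x : ℝ, (x ^ 2 * rexp (-(2⁻¹ : ℝ) * x ^ 2) - rexp (-(2⁻¹ : ℝ) * x ^ 2)) = 0 := by
    rw [← htot, hIic, hIoi]
    norm_num
  have := integral_sub hint2 hint0
  rw [hzero] at this
  linarith [this]

open Real in
private lemma rg_moment_sq : ∫ x, x ^ 2 ∂(gaussianReal 0 1) = 1 := by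
  rw [rg_integral_eq, rg_pdf_eq]
  have hre : ∀ x : ℝ, (Real.sqrt (2 * π))⁻¹ * rexp (-(2⁻¹ : ℝ) * x ^ 2) * x ^ 2
      = (Real.sqrt (2 * π))⁻¹ * (x ^ 2 * rexp (-(2⁻¹ : ℝ) * x ^ 2)) := fun x => by ring
  simp_rw [hre]
  rw [integral_const_mul]
  have : ∫ x : ℝ, x ^ 2 * rexp (-(2⁻¹ : ℝ) * x ^ 2) = Real.sqrt (2 * π) := by
    rw [rg_sq_exp_eq]
    rw [integral_gaussian]
    congr 1
    rw [div_eq_iff (by norm_num : (2⁻¹:ℝ) ≠ 0)]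
    ring
  rw [this]
  rw [inv_mul_cancel₀]
  positivity

example : True := trivial

open Real in
private lemma rg_map_neg :
    Measure.map (fun x : ℝ => -x) (gaussianReal 0 1) = gaussianReal 0 1 := by
  have h := gaussianReal_map_const_mul (μ := 0) (v := 1) (-1 : ℝ)
  have h2 : (NNReal.mk ((-1:ℝ)^2) (sq_nonneg _) : NNReal) * 1 = 1 := by
    ext; norm_num
  rw [h2] at h
  simpa using h

open Real in
private lemma rg_moment_odd {m : ℕ} (hm : Odd m) : ∫ x, x ^ m ∂(gaussianReal 0 1) = 0 := by
  have h : ∫ x, x ^ m ∂(gaussianReal 0 1)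
      = ∫ x, (-x) ^ m ∂(gaussianReal 0 1) := by
    conv_lhs => rw [← rg_map_neg]
    rw [integral_map (by fun_prop) (by fun_prop)]
  simp_rw [hm.neg_pow] at h
  rw [integral_neg] at h
  linarith

open Real in
private lemma rg_moment_even_ge {p : ℕ} : (1 : ℝ) ≤ ∫ x, x ^ (2 * p) ∂(gaussianReal 0 1) := by
  have hpt : ∀ x : ℝ, 1 + (p : ℝ) * (x ^ 2 - 1) ≤ x ^ (2 * p) := by
    intro x
    have h := one_add_mul_le_pow (a := x ^ 2 - 1) (by nlinarith [sq_nonneg x]) p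
    calc 1 + (p : ℝ) * (x ^ 2 - 1) ≤ (1 + (x ^ 2 - 1)) ^ p := h
      _ = x ^ (2 * p) := by rw [show (1 : ℝ) + (x ^ 2 - 1) = x ^ 2 by ring, ← pow_mul]
  have hintl : Integrable (fun x : ℝ => 1 + (p : ℝ) * (x ^ 2 - 1)) (gaussianReal 0 1) := by
    have h1 : Integrable (fun _ : ℝ => (1 : ℝ) - (p:ℝ)) (gaussianReal 0 1) := integrable_const _
    have h2 := (rg_integrable_pow 2).const_mul (p : ℝ)
    exact (h1.add h2).congr (Filter.Eventually.of_forall fun x => by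
      simp only [Pi.add_apply]; ring)
  have hmono := integral_mono hintl (rg_integrable_pow (2 * p)) hpt
  have hval : ∫ x, (1 + (p : ℝ) * (x ^ 2 - 1)) ∂(gaussianReal 0 1) = 1 := by
    have h1 : Integrable (fun _ : ℝ => (1 : ℝ) - (p:ℝ)) (gaussianReal 0 1) := integrable_const _
    have h2 := (rg_integrable_pow 2).const_mul (p : ℝ)
    have heq : (fun x : ℝ => 1 + (p : ℝ) * (x ^ 2 - 1))
        = fun x : ℝ => (1 - (p:ℝ)) + (p:ℝ) * x ^ 2 := by funext x; ring
    rw [heq, integral_add h1 h2, integral_const, integral_const_mul, rg_moment_sq]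
    simp
  linarith [hmono, hval.ge, hval.le]

private lemma rr_ae_pm {Ω : Type} [MeasurableSpace Ω] (μ : Measure Ω) [IsProbabilityMeasure μ]
    (X : Ω → ℝ) (hm : Measurable X)
    (h1 : μ (X ⁻¹' {1}) = 1/2) (h2 : μ (X ⁻¹' {-1}) = 1/2) :
    ∀ᵐ ω ∂μ, X ω = 1 ∨ X ω = -1 := by
  have hA : MeasurableSet (X ⁻¹' {1}) := hm (measurableSet_singleton _)
  have hB : MeasurableSet (X ⁻¹' {-1}) := hm (measurableSet_singleton _)
  have hdisj : Disjoint (X ⁻¹' {1}) (X ⁻¹' {-1}) := by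
    rw [Set.disjoint_left]
    intro ω hω1 hω2
    simp only [Set.mem_preimage, Set.mem_singleton_iff] at hω1 hω2
    norm_num [hω1] at hω2
  have hunion : μ (X ⁻¹' {1} ∪ X ⁻¹' {-1}) = 1 := by
    rw [measure_union hdisj hB, h1, h2]
    norm_num
    exact ENNReal.inv_two_add_inv_two
  have hcompl : μ ((X ⁻¹' {1} ∪ X ⁻¹' {-1})ᶜ) = 0 := by
    rw [measure_compl (hA.union hB) (measure_ne_top _ _), hunion, measure_univ, tsub_self]
  rw [ae_iff]
  have hset : {ω | ¬(X ω = 1 ∨ X ω = -1)} = (X ⁻¹' {1} ∪ X ⁻¹' {-1})ᶜ := by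
    ext ω; simp [not_or]
  rw [hset]
  exact hcompl

private lemma rr_integral_pow {Ω : Type} [MeasurableSpace Ω] (μ : Measure Ω)
    [IsProbabilityMeasure μ] (X : Ω → ℝ) (hm : Measurable X)
    (h1 : μ (X ⁻¹' {1}) = 1/2) (h2 : μ (X ⁻¹' {-1}) = 1/2) (m : ℕ) :
    ∫ ω, X ω ^ m ∂μ = if Even m then 1 else 0 := by
  have hA : MeasurableSet (X ⁻¹' {1}) := hm (measurableSet_singleton _)
  have hB : MeasurableSet (X ⁻¹' {-1}) := hm (measurableSet_singleton _)
  have heq : (fun ω => X ω ^ m) =ᵐ[μ]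
      fun ω => (X ⁻¹' {1}).indicator (fun _ => (1:ℝ)) ω
        + (X ⁻¹' {-1}).indicator (fun _ => (-1:ℝ)^m) ω := by
    filter_upwards [rr_ae_pm μ X hm h1 h2] with ω hω
    rcases hω with hω | hω
    · have hnB : ω ∉ X ⁻¹' {-1} := by
        simp only [Set.mem_preimage, Set.mem_singleton_iff]; rw [hω]; norm_num
      have hAω : ω ∈ X ⁻¹' {1} := by simp [Set.mem_preimage, hω]
      rw [Set.indicator_of_mem hAω, Set.indicator_of_notMem hnB, hω]
      simp
    · have hnA : ω ∉ X ⁻¹' {1} := by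
        simp only [Set.mem_preimage, Set.mem_singleton_iff]; rw [hω]; norm_num
      have hBω : ω ∈ X ⁻¹' {-1} := by simp [Set.mem_preimage, hω]
      rw [Set.indicator_of_mem hBω, Set.indicator_of_notMem hnA, hω]
      simp
  rw [integral_congr_ae heq, integral_add
    ((integrable_const (1:ℝ)).indicator hA) ((integrable_const ((-1:ℝ)^m)).indicator hB),
    integral_indicator_const _ hA, integral_indicator_const _ hB, measureReal_def, measureReal_def, h1, h2]
  have htr : ((1:ℝ≥0∞)/2).toReal = 1/2 := by
    rw [ENNReal.toReal_div]; simp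
  rw [htr]
  rcases Nat.even_or_odd m with hev | hod
  · rw [if_pos hev, hev.neg_one_pow]
    simp; norm_num
  · rw [if_neg (Nat.not_even_iff_odd.mpr hod), hod.neg_one_pow]
    simp

private lemma rr_indep_prod {Ω : Type} [MeasurableSpace Ω] {μ : Measure Ω}
    [IsProbabilityMeasure μ] {ι : Type} [DecidableEq ι] {g : ι → Ω → ℝ}
    (hindep : iIndepFun g μ) (hmeas : ∀ i, Measurable (g i))
    (hint : ∀ i, Integrable (g i) μ) (s : Finset ι) :
    Integrable (fun ω => ∏ i ∈ s, g i ω) μ ∧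
      ∫ ω, ∏ i ∈ s, g i ω ∂μ = ∏ i ∈ s, ∫ ω, g i ω ∂μ := by
  classical
  induction s using Finset.induction_on with
  | empty => simp
  | @insert i s hi ih =>
    have hIndep : IndepFun (∏ j ∈ s, g j) (g i) μ :=
      hindep.indepFun_finset_prod_of_notMem hmeas hi
    have hps : (∏ j ∈ s, g j) = fun ω => ∏ j ∈ s, g j ω := by
      funext ω; rw [Finset.prod_apply]
    rw [hps] at hIndep
    have hmul := hIndep.symm.integral_mul_eq_mul_integral (hint i).aestronglyMeasurable ih.1.aestronglyMeasurable
    have hintmul := hIndep.symm.integrable_mul (hint i) ih.1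
    have hfeq : (fun ω => ∏ j ∈ insert i s, g j ω)
        = (g i * fun ω => ∏ j ∈ s, g j ω) := by
      funext ω; rw [Finset.prod_insert hi]; rfl
    constructor
    · rw [hfeq]; exact hintmul
    · rw [hfeq, Finset.prod_insert hi, ih.2] at *
      exact hmul

private lemma rr_expand
    {Ω : Type} [MeasurableSpace Ω] (μ : Measure Ω) [IsProbabilityMeasure μ]
    (k n N : ℕ) (X : Fin n → Ω → ℝ)
    (hint : ∀ m : Fin n → ℕ, Integrable (fun ω => ∏ r, X r ω ^ m r) μ)
    (c : (Fin k → Fin n) → ℝ) (T : Finset (Fin k → Fin n)) :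
    ∫ ω, (∑ j ∈ T, c j * ∏ l, X (j l) ω) ^ N ∂μ
      = ∑ p ∈ Fintype.piFinset (fun _ : Fin N => T),
          (∏ i, c (p i)) *
            ∫ ω, ∏ r, X r ω ^ ((univ.filter
              (fun q : Fin N × Fin k => p q.1 q.2 = r)).card) ∂μ := by
  have hrw : ∀ ω, (∑ j ∈ T, c j * ∏ l, X (j l) ω) ^ N
      = ∑ p ∈ Fintype.piFinset (fun _ : Fin N => T),
          (∏ i, c (p i)) * ∏ r, X r ω ^ ((univ.filter
            (fun q : Fin N × Fin k => p q.1 q.2 = r)).card) := by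
    intro ω
    have h1 : (∑ j ∈ T, c j * ∏ l, X (j l) ω) ^ N
        = ∏ _i : Fin N, (∑ j ∈ T, c j * ∏ l, X (j l) ω) := by
      rw [Finset.prod_const, Finset.card_univ, Fintype.card_fin]
    rw [h1, Finset.prod_univ_sum]
    refine Finset.sum_congr rfl fun p _ => ?_
    rw [Finset.prod_mul_distrib]
    congr 1
    have h2 : ∏ i : Fin N, ∏ l : Fin k, X (p i l) ω
        = ∏ q : Fin N × Fin k, X (p q.1 q.2) ω := by
      rw [Fintype.prod_prod_type]
    rw [h2]
    rw [← Finset.prod_fiberwise_of_maps_to' (g := fun q : Fin N × Fin k => p q.1 q.2)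
      (t := (univ : Finset (Fin n))) (fun q _ => mem_univ _) (fun r => X r ω)]
    exact Finset.prod_congr rfl fun r _ => by rw [Finset.prod_const]
  simp only [hrw]
  rw [integral_finset_sum _ (fun p _ => (hint _).const_mul _)]
  simp_rw [integral_const_mul]



/-- **Lemma 1.** For independent Rademacher variables `ε_1,…,ε_n` and independent
standard normal variables `η_1,…,η_n`, with
`Z = Σ a(j_1,…,j_k) ε_{j_1}⋯ε_{j_k}` and `Z̄ = Σ |a(j_1,…,j_k)| η_{j_1}⋯η_{j_k}`
(sums over `k`-tuples of distinct indices), one has `E[Z^{2M}] ≤ E[Z̄^{2M}]`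
for every positive integer `M`. -/
theorem rademacher_moment_le_gaussian_moment
    (k n : ℕ) (hk : 0 < k) (hn : 0 < n)
    {Ω₁ : Type} [MeasurableSpace Ω₁] (μ₁ : Measure Ω₁) [IsProbabilityMeasure μ₁]
    {Ω₂ : Type} [MeasurableSpace Ω₂] (μ₂ : Measure Ω₂) [IsProbabilityMeasure μ₂]
    (ε : Fin n → Ω₁ → ℝ)
    (hεmeas : ∀ j, Measurable (ε j))
    (hεindep : iIndepFun ε μ₁)
    (hrad : ∀ j, μ₁ (ε j ⁻¹' {1}) = 1/2 ∧ μ₁ (ε j ⁻¹' {-1}) = 1/2)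
    (η : Fin n → Ω₂ → ℝ)
    (hηmeas : ∀ j, Measurable (η j))
    (hηindep : iIndepFun η μ₂)
    (hgauss : ∀ j, Measure.map (η j) μ₂ = gaussianReal 0 1)
    (a : (Fin k → Fin n) → ℝ)
    (hsym : ∀ j : Fin k → Fin n, Function.Injective j →
      ∀ π : Equiv.Perm (Fin k), a (j ∘ π) = a j)
    (M : ℕ) (hM : 0 < M) :
    ∫ ω, (∑ j ∈ univ.filter (fun j : Fin k → Fin n => Function.Injective j),
        a j * ∏ l, ε (j l) ω) ^ (2 * M) ∂μ₁
      ≤ ∫ ω, (∑ j ∈ univ.filter (fun j : Fin k → Fin n => Function.Injective j),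
          |a j| * ∏ l, η (j l) ω) ^ (2 * M) ∂μ₂ := by
  classical
  set N := 2 * M with hN
  set T := univ.filter (fun j : Fin k → Fin n => Function.Injective j) with hT
  -- ε side: single-variable integrability and moments
  have hεae : ∀ r, ∀ᵐ ω ∂μ₁, ε r ω = 1 ∨ ε r ω = -1 := fun r =>
    rr_ae_pm μ₁ (ε r) (hεmeas r) (hrad r).1 (hrad r).2
  have hεint1 : ∀ (r : Fin n) (mm : ℕ), Integrable (fun ω => ε r ω ^ mm) μ₁ := by
    intro r mm
    refine Integrable.mono' (integrable_const (1:ℝ))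
      ((hεmeas r).pow_const mm).aestronglyMeasurable ?_
    filter_upwards [hεae r] with ω hω
    rcases hω with h | h <;> simp [Real.norm_eq_abs, abs_pow, h]
  have hεintP : ∀ m : Fin n → ℕ, Integrable (fun ω => ∏ r, ε r ω ^ m r) μ₁ := by
    intro m
    refine Integrable.mono' (integrable_const (1:ℝ))
      (Finset.aestronglyMeasurable_fun_prod _
        (fun r _ => ((hεmeas r).pow_const (m r)).aestronglyMeasurable)) ?_
    have hall : ∀ᵐ ω ∂μ₁, ∀ r, ε r ω = 1 ∨ ε r ω = -1 := ae_all_iff.mpr hεae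
    filter_upwards [hall] with ω hω
    rw [Real.norm_eq_abs, Finset.abs_prod]
    have : ∀ r ∈ (univ : Finset (Fin n)), |ε r ω ^ m r| = 1 := by
      intro r _
      rcases hω r with h | h <;> simp [abs_pow, h]
    rw [Finset.prod_congr rfl this]
    simp
  have hεprod : ∀ m : Fin n → ℕ,
      ∫ ω, ∏ r, ε r ω ^ m r ∂μ₁ = ∏ r, ∫ ω, ε r ω ^ m r ∂μ₁ := by
    intro m
    have hcomp : iIndepFun (fun r ω => ε r ω ^ m r) μ₁ :=
      hεindep.comp (fun r (x : ℝ) => x ^ m r) (fun r => measurable_id.pow_const (m r))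
    exact (rr_indep_prod hcomp (fun r => (hεmeas r).pow_const (m r))
      (fun r => hεint1 r (m r)) univ).2
  have hεval : ∀ (r : Fin n) (mm : ℕ),
      ∫ ω, ε r ω ^ mm ∂μ₁ = if Even mm then 1 else 0 := fun r mm =>
    rr_integral_pow μ₁ (ε r) (hεmeas r) (hrad r).1 (hrad r).2 mm
  -- η side
  have hηint1 : ∀ (r : Fin n) (mm : ℕ), Integrable (fun ω => η r ω ^ mm) μ₂ := by
    intro r mm
    have h := rg_integrable_pow mm
    rw [← hgauss r] at h
    exact (integrable_map_measure
      (measurable_id.pow_const mm).aestronglyMeasurable (hηmeas r).aemeasurable).mp h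
  have hηval : ∀ (r : Fin n) (mm : ℕ),
      ∫ ω, η r ω ^ mm ∂μ₂ = ∫ x, x ^ mm ∂(gaussianReal 0 1) := by
    intro r mm
    have hsm : AEStronglyMeasurable (fun x : ℝ => x ^ mm) (Measure.map (η r) μ₂) :=
      (measurable_id.pow_const mm).aestronglyMeasurable
    rw [← hgauss r, integral_map (hηmeas r).aemeasurable hsm]
  have hηindepP : ∀ m : Fin n → ℕ,
      iIndepFun (fun r ω => η r ω ^ m r) μ₂ := fun m =>
    hηindep.comp (fun r (x : ℝ) => x ^ m r) (fun r => measurable_id.pow_const (m r))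
  have hηintP : ∀ m : Fin n → ℕ, Integrable (fun ω => ∏ r, η r ω ^ m r) μ₂ := fun m =>
    (rr_indep_prod (hηindepP m) (fun r => (hηmeas r).pow_const (m r))
      (fun r => hηint1 r (m r)) univ).1
  have hηprod : ∀ m : Fin n → ℕ,
      ∫ ω, ∏ r, η r ω ^ m r ∂μ₂ = ∏ r, ∫ ω, η r ω ^ m r ∂μ₂ := fun m =>
    (rr_indep_prod (hηindepP m) (fun r => (hηmeas r).pow_const (m r))
      (fun r => hηint1 r (m r)) univ).2
  -- expand both sides
  rw [rr_expand μ₁ k n N ε hεintP a T, rr_expand μ₂ k n N η hηintP (fun j => |a j|) T]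
  refine Finset.sum_le_sum fun p _ => ?_
  set m : Fin n → ℕ := fun r =>
    ((univ : Finset (Fin N × Fin k)).filter (fun q => p q.1 q.2 = r)).card with hm
  rw [hεprod m, hηprod m]
  simp_rw [hεval, hηval]
  by_cases hall : ∀ r, Even (m r)
  · have hL : (∏ r, if Even (m r) then (1:ℝ) else 0) = 1 := by
      rw [Finset.prod_congr rfl fun r _ => if_pos (hall r)]
      simp
    have hGge : (1:ℝ) ≤ ∏ r, ∫ x, x ^ m r ∂(gaussianReal 0 1) := by
      calc (1:ℝ) = ∏ _r : Fin n, 1 := by simp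
        _ ≤ ∏ r, ∫ x, x ^ m r ∂(gaussianReal 0 1) := by
            refine Finset.prod_le_prod (fun _ _ => zero_le_one) fun r _ => ?_
            obtain ⟨c, hc⟩ := hall r
            have hmr : m r = 2 * c := by omega
            rw [hmr]
            exact rg_moment_even_ge
    rw [hL, mul_one]
    calc ∏ i, a (p i) ≤ |∏ i, a (p i)| := le_abs_self _
      _ = ∏ i, |a (p i)| := Finset.abs_prod _ _
      _ = (∏ i, |a (p i)|) * 1 := (mul_one _).symm
      _ ≤ (∏ i, |a (p i)|) * ∏ r, ∫ x, x ^ m r ∂(gaussianReal 0 1) := by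
          exact mul_le_mul_of_nonneg_left hGge (Finset.prod_nonneg fun i _ => abs_nonneg _)
  · push_neg at hall
    obtain ⟨r₀, hr₀⟩ := hall
    have hodd : Odd (m r₀) := Nat.not_even_iff_odd.mp hr₀
    have hL : (∏ r, if Even (m r) then (1:ℝ) else 0) = 0 :=
      Finset.prod_eq_zero (mem_univ r₀) (if_neg hr₀)
    have hR : (∏ r, ∫ x, x ^ m r ∂(gaussianReal 0 1)) = 0 :=
      Finset.prod_eq_zero (mem_univ r₀) (rg_moment_odd hodd)
    rw [hL, hR, mul_zero, mul_zero]
end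

section
/- Let k be a positive integer, let V > 0, and let Z be a real random variable such that E[Z^{2M}] ≤ 1·3·5⋯(2kM−1)·V^{2M} for every positive integer M. Then there exists a constant A > 0, depending only on k, such that P(|Z| > u) ≤ A·exp(−(1/2)·(u/V)^{2/k}) for all u ≥ 0. -/
open MeasureTheory ProbabilityTheory

lemma stirling_upper (n : ℕ) (hn : 0 < n) :
    (n.factorial : ℝ) ≤ (Real.exp 1 / Real.sqrt 2) * (Real.sqrt (2 * n) * ((n : ℝ) / Real.exp 1) ^ n) := by
  have hd : 0 < Real.sqrt (2 * n) * ((n : ℝ) / Real.exp 1) ^ n := by positivity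
  have h1 : Stirling.stirlingSeq n ≤ Stirling.stirlingSeq 1 := by
    obtain ⟨m, rfl⟩ := Nat.exists_eq_add_of_lt hn
    simpa using Stirling.stirlingSeq'_antitone (Nat.zero_le m)
  rw [Stirling.stirlingSeq_one] at h1
  have := Stirling.stirlingSeq n
  rw [Stirling.stirlingSeq, div_le_iff₀ hd] at h1
  simpa [mul_assoc] using h1

lemma stirling_lower (n : ℕ) (hn : 0 < n) :
    Real.sqrt Real.pi * (Real.sqrt (2 * n) * ((n : ℝ) / Real.exp 1) ^ n) ≤ (n.factorial : ℝ) := by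
  have hd : 0 < Real.sqrt (2 * n) * ((n : ℝ) / Real.exp 1) ^ n := by positivity
  have h1 : Real.sqrt Real.pi ≤ Stirling.stirlingSeq n := by
    obtain ⟨m, rfl⟩ := Nat.exists_eq_add_of_lt hn
    have htend : Filter.Tendsto (fun m => Stirling.stirlingSeq (m + 1)) Filter.atTop
        (nhds (Real.sqrt Real.pi)) :=
      Stirling.tendsto_stirlingSeq_sqrt_pi.comp (Filter.tendsto_add_atTop_nat 1)
    simpa using Stirling.stirlingSeq'_antitone.le_of_tendsto htend m
  rw [Stirling.stirlingSeq, le_div_iff₀ hd] at h1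
  linarith [h1]

lemma df_le (n : ℕ) (hn : 0 < n) :
    ((2 * n - 1).doubleFactorial : ℝ) ≤ Real.exp 1 * ((2 * (n:ℝ)) / Real.exp 1) ^ n := by
  set e : ℝ := Real.exp 1 with he
  have he0 : 0 < e := Real.exp_pos 1
  have hP : (0:ℝ) < 2 ^ n * (n.factorial : ℝ) := by positivity
  set x : ℝ := (n : ℝ) with hx
  have hx0 : 0 < x := by rw [hx]; exact_mod_cast hn
  -- natural number identity
  have hidN : (2 * n).factorial = (2 * n - 1).doubleFactorial * (2 ^ n * n.factorial) := by
    obtain ⟨m, rfl⟩ : ∃ m, n = m + 1 := ⟨n - 1, by omega⟩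
    have h2 : 2 * (m + 1) - 1 = 2 * m + 1 := by omega
    have h1 : 2 * (m + 1) = (2 * m + 1) + 1 := by omega
    rw [h2, h1, Nat.factorial_eq_mul_doubleFactorial]
    have h3 : (2 * m + 1 + 1) = 2 * (m + 1) := by omega
    rw [h3, Nat.doubleFactorial_two_mul]
    ring
  have hid : ((2 * n - 1).doubleFactorial : ℝ) * (2 ^ n * n.factorial) = ((2 * n).factorial : ℝ) := by
    rw [hidN]; push_cast; ring
  -- upper bound for (2n)!
  have hup := stirling_upper (2 * n) (by omega)
  have hcast : ((2 * n : ℕ) : ℝ) = 2 * x := by push_cast; ring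
  rw [hcast] at hup
  -- algebraic identity
  have halg : (Real.exp 1 / Real.sqrt 2) * (Real.sqrt (2 * (2 * x)) * ((2 * x) / e) ^ (2 * n))
      = (e * ((2 * x) / e) ^ n) * (Real.sqrt (2 * x) * (2 ^ n * (x / e) ^ n)) := by
    have hs : Real.sqrt (2 * (2 * x)) = Real.sqrt 2 * Real.sqrt (2 * x) :=
      Real.sqrt_mul (by norm_num) _
    have hp1 : ((2 * x) / e) ^ (2 * n) = (((2 * x) / e) ^ n) ^ 2 := by
      rw [← pow_mul, mul_comm n 2]
    have hp2 : ((2 * x) / e) ^ n = 2 ^ n * (x / e) ^ n := by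
      rw [mul_div_assoc, mul_pow]
    have hs2 : Real.sqrt 2 ≠ 0 := by positivity
    rw [hs, hp1, hp2, ← he]
    field_simp
  rw [halg] at hup
  -- lower bound for n!
  have hlow := stirling_lower n hn
  have hπ : (1:ℝ) ≤ Real.sqrt Real.pi := by
    rw [show (1:ℝ) = Real.sqrt 1 by simp]
    exact Real.sqrt_le_sqrt (by linarith [Real.pi_gt_three])
  have hfac : Real.sqrt (2 * x) * (2 ^ n * (x / e) ^ n) ≤ (n.factorial : ℝ) * 2 ^ n := by
    have h1 : Real.sqrt (2 * x) * ((x / e) ^ n)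
        ≤ Real.sqrt Real.pi * (Real.sqrt (2 * x) * (x / e) ^ n) := by
      nlinarith [Real.sqrt_nonneg (2 * x), pow_nonneg (div_nonneg hx0.le he0.le) n,
        mul_nonneg (Real.sqrt_nonneg (2*x)) (pow_nonneg (div_nonneg hx0.le he0.le) n)]
    calc Real.sqrt (2 * x) * (2 ^ n * (x / e) ^ n)
        = (Real.sqrt (2 * x) * (x / e) ^ n) * 2 ^ n := by ring
      _ ≤ (Real.sqrt Real.pi * (Real.sqrt (2 * x) * (x / e) ^ n)) * 2 ^ n := by
          have h2 : (0:ℝ) ≤ (2:ℝ) ^ n := by positivity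
          nlinarith [h1]
      _ ≤ (n.factorial : ℝ) * 2 ^ n := by
          have h2 : (0:ℝ) ≤ (2:ℝ) ^ n := by positivity
          have := hlow
          nlinarith [hlow]
  have hkey : ((2 * n - 1).doubleFactorial : ℝ) * (2 ^ n * n.factorial)
      ≤ (e * ((2 * x) / e) ^ n) * (2 ^ n * n.factorial) := by
    have hnn : (0:ℝ) ≤ e * ((2 * x) / e) ^ n := by positivity
    calc ((2 * n - 1).doubleFactorial : ℝ) * (2 ^ n * n.factorial)
        = ((2 * n).factorial : ℝ) := hid
      _ ≤ (e * ((2 * x) / e) ^ n) * (Real.sqrt (2 * x) * (2 ^ n * (x / e) ^ n)) := hup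
      _ ≤ (e * ((2 * x) / e) ^ n) * ((n.factorial : ℝ) * 2 ^ n) := by
          exact mul_le_mul_of_nonneg_left hfac hnn
      _ = (e * ((2 * x) / e) ^ n) * (2 ^ n * n.factorial) := by ring
  exact le_of_mul_le_mul_right hkey hP

lemma markov_aux {Ω : Type} [MeasurableSpace Ω] (μ : Measure Ω) [IsProbabilityMeasure μ]
    {f : Ω → ℝ} (hf : 0 ≤ᵐ[μ] f) (hint : Integrable f μ) {ε : ℝ} (hε : 0 < ε) :
    μ {ω | ε ≤ f ω} ≤ ENNReal.ofReal ((∫ ω, f ω ∂μ) / ε) := by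
  have h := mul_meas_ge_le_integral_of_nonneg hf hint ε
  have hne : μ {ω | ε ≤ f ω} ≠ ⊤ := measure_ne_top μ _
  rw [← ENNReal.ofReal_toReal hne]
  apply ENNReal.ofReal_le_ofReal
  rw [le_div_iff₀ hε]
  rw [mul_comm]; exact h


/-- **From moments to tails.** If `Z` is a real random variable with
`E[Z^{2M}] ≤ (2kM-1)‼ · V^{2M}` for every positive integer `M` (with `V > 0`), then
`P(|Z| > u) ≤ A · exp(-(1/2)(u/V)^{2/k})` for all `u ≥ 0`, where `A > 0` depends
only on `k`. -/
theorem tail_bound_of_moment_bound (k : ℕ) (hk : 0 < k) :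
    ∃ A : ℝ, 0 < A ∧
      ∀ (Ω : Type) (mΩ : MeasurableSpace Ω) (μ : Measure Ω), IsProbabilityMeasure μ →
      ∀ (Z : Ω → ℝ), Measurable Z →
      ∀ (V : ℝ), 0 < V →
        (∀ M : ℕ, 0 < M → Integrable (fun ω => Z ω ^ (2 * M)) μ) →
        (∀ M : ℕ, 0 < M →
          ∫ ω, Z ω ^ (2 * M) ∂μ ≤ (Nat.doubleFactorial (2 * k * M - 1) : ℝ) * V ^ (2 * M)) →
      ∀ u : ℝ, 0 ≤ u →
        μ {ω | u < |Z ω|}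
          ≤ ENNReal.ofReal (A * Real.exp (-(1/2) * (u / V) ^ ((2 : ℝ) / (k : ℝ)))) := by
  refine ⟨Real.exp ((k : ℝ) + 1), Real.exp_pos _, ?_⟩
  intro Ω mΩ μ hμ Z hZ V hV hint hmom u hu
  have hk' : (0:ℝ) < (k:ℝ) := by exact_mod_cast hk
  set x : ℝ := u / V with hxdef
  have hx0 : 0 ≤ x := div_nonneg hu hV.le
  set t : ℝ := x ^ ((2:ℝ) / (k:ℝ)) with htdef
  have ht0 : 0 ≤ t := Real.rpow_nonneg hx0 _
  by_cases hcase : t < 2 * k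
  · -- trivial case
    calc μ {ω | u < |Z ω|} ≤ 1 := prob_le_one
      _ ≤ ENNReal.ofReal (Real.exp ((k : ℝ) + 1) * Real.exp (-(1/2) * t)) := by
          rw [← ENNReal.ofReal_one]
          apply ENNReal.ofReal_le_ofReal
          rw [← Real.exp_add]
          apply Real.one_le_exp
          linarith
  · push_neg at hcase
    have htpos : 0 < t := lt_of_lt_of_le (by positivity) hcase
    have hu0 : 0 < u := by
      rcases hu.lt_or_eq with h | h
      · exact h
      · exfalso
        have hx : x = 0 := by rw [hxdef, ← h, zero_div]
        have : t = 0 := by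
          rw [htdef, hx, Real.zero_rpow]
          positivity
        linarith
    have hxpos : 0 < x := div_pos hu0 hV
    set M : ℕ := ⌊t / (2 * k)⌋₊ with hMdef
    have hMpos : 0 < M := by
      rw [hMdef]
      apply Nat.pos_of_ne_zero
      intro h
      have := Nat.floor_eq_zero.mp h
      have h1 : (1:ℝ) ≤ t / (2 * k) := by
        rw [le_div_iff₀ (by positivity)]
        linarith
      linarith
    set n : ℕ := k * M with hndef
    have hnpos : 0 < n := Nat.mul_pos hk hMpos
    have hnr : (n : ℝ) = (k : ℝ) * M := by rw [hndef]; push_cast; ring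
    have h2n : 2 * (n : ℝ) ≤ t := by
      have := Nat.floor_le (show (0:ℝ) ≤ t / (2 * k) by positivity)
      rw [← hMdef, le_div_iff₀ (by positivity)] at this
      rw [hnr]; nlinarith
    have hnk : t / 2 < (n : ℝ) + k := by
      have := Nat.lt_floor_add_one (t / (2 * k))
      rw [← hMdef, div_lt_iff₀ (by positivity)] at this
      rw [hnr]; nlinarith
    -- Markov's inequality
    have hf_nonneg : 0 ≤ᵐ[μ] fun ω => Z ω ^ (2 * M) :=
      Filter.Eventually.of_forall fun ω => (even_two_mul M).pow_nonneg _
    have hε : 0 < u ^ (2 * M) := pow_pos hu0 _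
    have hsub : {ω | u < |Z ω|} ⊆ {ω | u ^ (2 * M) ≤ Z ω ^ (2 * M)} := by
      intro ω hω
      have h1 : u ^ (2 * M) ≤ |Z ω| ^ (2 * M) :=
        pow_le_pow_left₀ hu (le_of_lt hω) _
      rwa [pow_abs, abs_of_nonneg ((even_two_mul M).pow_nonneg _)] at h1
    have hmkv := markov_aux μ hf_nonneg (hint M hMpos) hε
    refine le_trans (le_trans (measure_mono hsub) hmkv) ?_
    apply ENNReal.ofReal_le_ofReal
    set e : ℝ := Real.exp 1 with he
    have he0 : 0 < e := Real.exp_pos 1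
    have hdf : ((2 * k * M - 1).doubleFactorial : ℝ) ≤ e * ((2 * (n : ℝ)) / e) ^ n := by
      have heq : 2 * k * M = 2 * n := by rw [hndef, mul_assoc]
      rw [heq]
      exact df_le n hnpos
    have hI : ∫ ω, Z ω ^ (2 * M) ∂μ ≤ e * ((2 * (n : ℝ)) / e) ^ n * V ^ (2 * M) :=
      le_trans (hmom M hMpos) (mul_le_mul_of_nonneg_right hdf (by positivity))
    have htn : t ^ n = x ^ (2 * M) := by
      have hexp : ((2:ℝ) / (k:ℝ)) * (n:ℝ) = ((2 * M : ℕ) : ℝ) := by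
        rw [hnr]; push_cast; field_simp
      rw [← Real.rpow_natCast t n, ← Real.rpow_natCast x (2 * M), htdef,
        ← Real.rpow_mul hx0, hexp]
    have hVU : V ^ (2 * M) / u ^ (2 * M) = (t ^ n)⁻¹ := by
      rw [← div_pow]
      have h1 : V / u = x⁻¹ := by rw [hxdef]; field_simp
      rw [h1, inv_pow, htn]
    have hpow : ((2 * (n:ℝ)) / e) ^ n * (t ^ n)⁻¹ = ((2 * (n:ℝ)) / (e * t)) ^ n := by
      have h1 : (2 * (n:ℝ)) / (e * t) = ((2 * (n:ℝ)) / e) / t := by rw [div_div]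
      have h2 : ((2 * (n:ℝ)) / e / t) ^ n = ((2 * (n:ℝ)) / e) ^ n / t ^ n := div_pow _ _ _
      rw [h1, h2]; exact (div_eq_mul_inv _ _).symm
    have hsmall : (2 * (n:ℝ)) / (e * t) ≤ e⁻¹ := by
      rw [div_le_iff₀ (by positivity)]
      have h1 : e⁻¹ * (e * t) = t := by field_simp
      rw [h1]; exact h2n
    have hpow_le : ((2 * (n:ℝ)) / (e * t)) ^ n ≤ (e⁻¹) ^ n :=
      pow_le_pow_left₀ (by positivity) hsmall n
    have hexp_inv : (e⁻¹ : ℝ) ^ n = Real.exp (-(n:ℝ)) := by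
      rw [he, ← Real.exp_neg, ← Real.exp_nat_mul]
      congr 1; ring
    calc (∫ ω, Z ω ^ (2 * M) ∂μ) / u ^ (2 * M)
        ≤ (e * ((2 * (n:ℝ)) / e) ^ n * V ^ (2 * M)) / u ^ (2 * M) := by gcongr
      _ = e * ((2 * (n:ℝ)) / (e * t)) ^ n := by
          rw [mul_div_assoc, hVU, mul_assoc, hpow]
      _ ≤ e * (e⁻¹) ^ n := mul_le_mul_of_nonneg_left hpow_le he0.le
      _ = Real.exp (1 + -(n:ℝ)) := by rw [hexp_inv, he, ← Real.exp_add]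
      _ ≤ Real.exp ((k:ℝ) + 1) * Real.exp (-(1/2) * t) := by
          rw [← Real.exp_add]
          apply Real.exp_le_exp.2
          linarith
end
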